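/- Let 0 = R₀ < R₁ < ⋯ < R_M and let k : ℝ → ℝ. Suppose w₀, …, w_M ≥ 0 with Σⱼ wⱼ = 1, and there exist binary indicators λ₁, …, λ_M ∈ {0,1} with Σⱼ λⱼ = 1, w₀ ≤ λ₁, wⱼ ≤ λⱼ + λⱼ₊₁ for 1 ≤ j < M, and w_M ≤ λ_M. Define r = Σⱼ wⱼRⱼ and v = Σⱼ wⱼ·k(Rⱼ). Then there exists an index 1 ≤ j ≤ M such that r ∈ [Rⱼ₋₁, Rⱼ] and v equals the value at r of the linear interpolant of k between (Rⱼ₋₁, k(Rⱼ₋₁)) and (Rⱼ, k(Rⱼ)). -/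

import Mathlib

theorem sos2_encoding_correct (M : ℕ) (hM : 0 < M) (R : ℕ → ℝ) (hR0 : R 0 = 0)
    (hRmono : ∀ i j, i < j → j ≤ M → R i < R j) (k : ℝ → ℝ)
    (w : ℕ → ℝ) (hw : ∀ j ≤ M, 0 ≤ w j)
    (hwsum : ∑ j ∈ Finset.range (M + 1), w j = 1)
    (lam : ℕ → ℝ) (hlam01 : ∀ j, 1 ≤ j → j ≤ M → lam j = 0 ∨ lam j = 1)
    (hlamsum : ∑ j ∈ Finset.Icc 1 M, lam j = 1)
    (h0 : w 0 ≤ lam 1)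
    (hmid : ∀ j, 1 ≤ j → j < M → w j ≤ lam j + lam (j + 1))
    (hlast : w M ≤ lam M) :
    ∃ j, 1 ≤ j ∧ j ≤ M ∧
      (∑ i ∈ Finset.range (M + 1), w i * R i) ∈ Set.Icc (R (j - 1)) (R j) ∧
      (∑ i ∈ Finset.range (M + 1), w i * k (R i)) =
        k (R (j - 1)) + (k (R j) - k (R (j - 1))) *
          ((∑ i ∈ Finset.range (M + 1), w i * R i) - R (j - 1)) / (R j - R (j - 1)) := by
  -- find the unique j with lam j = 1
  have hex : ∃ j, 1 ≤ j ∧ j ≤ M ∧ lam j = 1 := by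
    by_contra h
    push_neg at h
    have hz : ∑ j ∈ Finset.Icc 1 M, lam j = 0 := by
      apply Finset.sum_eq_zero
      intro i hi
      simp only [Finset.mem_Icc] at hi
      rcases hlam01 i hi.1 hi.2 with h0' | h1'
      · exact h0'
      · exact absurd h1' (h i hi.1 hi.2)
    rw [hz] at hlamsum
    norm_num at hlamsum
  obtain ⟨j, hj1, hjM, hlj⟩ := hex
  have hlamnn : ∀ i ∈ Finset.Icc 1 M, 0 ≤ lam i := by
    intro i hi
    simp only [Finset.mem_Icc] at hi
    rcases hlam01 i hi.1 hi.2 with h' | h' <;> rw [h'] <;> norm_num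
  have hlam0 : ∀ i, 1 ≤ i → i ≤ M → i ≠ j → lam i = 0 := by
    intro i hi1 hiM hij
    by_contra h
    have hli : lam i = 1 := (hlam01 i hi1 hiM).resolve_left h
    have hsub : ({i, j} : Finset ℕ) ⊆ Finset.Icc 1 M := by
      intro x hx
      simp only [Finset.mem_insert, Finset.mem_singleton] at hx
      rcases hx with rfl | rfl <;> simp [Finset.mem_Icc] <;> omega
    have h2 : (2:ℝ) ≤ ∑ x ∈ Finset.Icc 1 M, lam x := by
      have := Finset.sum_le_sum_of_subset_of_nonneg hsub
        (fun x hx _ => hlamnn x hx)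
      rw [Finset.sum_pair hij, hli, hlj] at this
      linarith
    linarith
  -- other weights vanish
  have hw0 : ∀ i, i ≤ M → i ≠ j - 1 → i ≠ j → w i = 0 := by
    intro i hiM hij1 hij
    have hwi := hw i hiM
    rcases Nat.eq_zero_or_pos i with rfl | hi0
    · have : lam 1 = 0 := hlam0 1 le_rfl hM (by omega)
      linarith
    · rcases eq_or_ne i M with h | hiM'
      · subst h
        have : lam i = 0 := hlam0 i hi0 le_rfl hij
        linarith
      · have hiM2 : i < M := lt_of_le_of_ne hiM hiM'
        have h1 : lam i = 0 := hlam0 i hi0 hiM hij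
        have h2 : lam (i + 1) = 0 := hlam0 (i + 1) (by omega) (by omega) (by omega)
        have := hmid i hi0 hiM2
        linarith
  have hpairsub : ({j - 1, j} : Finset ℕ) ⊆ Finset.range (M + 1) := by
    intro x hx
    simp only [Finset.mem_insert, Finset.mem_singleton] at hx
    rcases hx with rfl | rfl <;> simp [Finset.mem_range] <;> omega
  have hne : j - 1 ≠ j := by omega
  have hsum : ∀ f : ℕ → ℝ, ∑ i ∈ Finset.range (M + 1), w i * f i
      = w (j - 1) * f (j - 1) + w j * f j := by
    intro f
    rw [← Finset.sum_subset hpairsub (by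
      intro x hx hxn
      simp only [Finset.mem_range] at hx
      simp only [Finset.mem_insert, Finset.mem_singleton, not_or] at hxn
      rw [hw0 x (by omega) hxn.1 hxn.2, zero_mul])]
    rw [Finset.sum_pair hne]
  have hab : w (j - 1) + w j = 1 := by
    rw [← hwsum, ← Finset.sum_subset hpairsub (by
      intro x hx hxn
      simp only [Finset.mem_range] at hx
      simp only [Finset.mem_insert, Finset.mem_singleton, not_or] at hxn
      exact hw0 x (by omega) hxn.1 hxn.2), Finset.sum_pair hne]
  have ha : 0 ≤ w (j - 1) := hw _ (by omega)
  have hb : 0 ≤ w j := hw _ hjM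
  have hd : R (j - 1) < R j := hRmono _ _ (by omega) hjM
  have hr : ∑ i ∈ Finset.range (M + 1), w i * R i
      = w (j - 1) * R (j - 1) + w j * R j := hsum R
  have hv : ∑ i ∈ Finset.range (M + 1), w i * k (R i)
      = w (j - 1) * k (R (j - 1)) + w j * k (R j) := hsum (fun i => k (R i))
  refine ⟨j, hj1, hjM, ⟨?_, ?_⟩, ?_⟩
  · rw [hr]
    have h1 : w (j - 1) * R (j - 1) + w j * R j - R (j - 1)
        = w j * (R j - R (j - 1)) := by linear_combination R (j - 1) * hab
    have h2 := mul_nonneg hb (by linarith : (0:ℝ) ≤ R j - R (j - 1))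
    linarith
  · rw [hr]
    have h1 : R j - (w (j - 1) * R (j - 1) + w j * R j)
        = w (j - 1) * (R j - R (j - 1)) := by linear_combination (-(R j)) * hab
    have h2 := mul_nonneg ha (by linarith : (0:ℝ) ≤ R j - R (j - 1))
    linarith
  · have hkey : (∑ i ∈ Finset.range (M + 1), w i * R i) - R (j - 1)
        = w j * (R j - R (j - 1)) := by
      rw [hr]; linear_combination R (j - 1) * hab
    rw [hkey, hv]
    have hd0 : R j - R (j - 1) ≠ 0 := by linarith
    field_simp
    ring_nf
    linear_combination (k (R (j - 1))) * hab
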